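/- Let W workers send messages y_1,...,y_W ∈ R^D with regular set R of size R > W/2, and let TriMean be coordinate-wise trimmed mean that in each dimension discards the W−R smallest and W−R largest entries and averages the remaining 2R−W entries. If δ = 1 − R/W < 1/2, then ‖TriMean(y_1,...,y_W) − ȳ‖ ≤ (3δ/(1−2δ)) · min{√D, √R} · max_{w∈R} ‖y_w − ȳ‖, where ȳ = (1/R)Σ_{w∈R} y_w. -/

import Mathlib

lemma abs_coord_le {D : ℕ} (x : EuclideanSpace ℝ (Fin D)) (i : Fin D) : |x i| ≤ ‖x‖ := by
  rw [EuclideanSpace.norm_eq, ← Real.sqrt_sq_eq_abs]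
  apply Real.sqrt_le_sqrt
  have h := Finset.single_le_sum (f := fun j => ‖x j‖ ^ 2)
    (fun j _ => sq_nonneg _) (Finset.mem_univ i)
  simpa [Real.norm_eq_abs, sq_abs] using h

lemma coord_key (W R : ℕ) (hRW : R ≤ W) (h2 : W < 2 * R)
    (Reg : Finset (Fin W)) (hReg : Reg.Nonempty) (hcard : Reg.card = R)
    (f : Fin W → ℝ) (μ : ℝ) (hμ : μ = (R : ℝ)⁻¹ * ∑ w ∈ Reg, f w)
    (Md : ℝ) (hMd : ∀ w ∈ Reg, |f w - μ| ≤ Md) :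
    |((2 * R - W : ℕ) : ℝ)⁻¹ *
      (∑ i ∈ Finset.univ.filter (fun i : Fin W => W - R ≤ (i : ℕ) ∧ (i : ℕ) < R),
        f (Tuple.sort f i)) - μ| ≤ 3 * ((W - R : ℕ) : ℝ) / ((2 * R - W : ℕ) : ℝ) * Md := by
  have hR : 0 < R := by omega
  set σ := Tuple.sort f with hσ
  set I := Finset.univ.filter (fun i : Fin W => W - R ≤ (i : ℕ) ∧ (i : ℕ) < R) with hI
  set S := I.image σ with hS
  have hσinj : Function.Injective σ := σ.injective
  have hMd0 : 0 ≤ Md := le_trans (abs_nonneg _) (hMd _ hReg.choose_spec)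
  have hcompl : (Regᶜ : Finset (Fin W)).card = W - R := by
    rw [Finset.card_compl, hcard, Fintype.card_fin]
  have himg : I.image Fin.val = Finset.Ico (W - R) R := by
    ext n
    simp only [hI, Finset.mem_image, Finset.mem_filter, Finset.mem_univ, true_and,
      Finset.mem_Ico]
    constructor
    · rintro ⟨i, ⟨h1a, h1b⟩, rfl⟩; exact ⟨h1a, h1b⟩
    · rintro ⟨h1a, h1b⟩; exact ⟨⟨n, lt_of_lt_of_le h1b hRW⟩, ⟨h1a, h1b⟩, rfl⟩
  have hIcard : I.card = 2 * R - W := by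
    have h := Finset.card_image_of_injective I (Fin.val_injective)
    rw [himg, Nat.card_Ico] at h
    omega
  have hScard : S.card = 2 * R - W := by
    rw [hS, Finset.card_image_of_injective _ hσinj, hIcard]
  have hsurv : ∀ w ∈ S, |f w - μ| ≤ Md := by
    intro w hw
    obtain ⟨i, hi, rfl⟩ := Finset.mem_image.mp hw
    rw [hI, Finset.mem_filter] at hi
    obtain ⟨-, hia, hib⟩ := hi
    have hlow : ∃ w₁ ∈ Reg, f w₁ ≤ f (σ i) := by
      by_contra hcon
      push_neg at hcon
      have hsub : (Finset.Iic i).image σ ⊆ Regᶜ := by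
        intro w hw'
        obtain ⟨j, hj, rfl⟩ := Finset.mem_image.mp hw'
        rw [Finset.mem_compl]
        intro hmem
        have hmono : f (σ j) ≤ f (σ i) := Tuple.monotone_sort f (Finset.mem_Iic.mp hj)
        exact absurd (hcon _ hmem) (not_lt.mpr hmono)
      have hc := Finset.card_le_card hsub
      rw [Finset.card_image_of_injective _ hσinj, Fin.card_Iic, hcompl] at hc
      omega
    have hhigh : ∃ w₂ ∈ Reg, f (σ i) ≤ f w₂ := by
      by_contra hcon
      push_neg at hcon
      have hsub : (Finset.Ici i).image σ ⊆ Regᶜ := by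
        intro w hw'
        obtain ⟨j, hj, rfl⟩ := Finset.mem_image.mp hw'
        rw [Finset.mem_compl]
        intro hmem
        have hmono : f (σ i) ≤ f (σ j) := Tuple.monotone_sort f (Finset.mem_Ici.mp hj)
        exact absurd (hcon _ hmem) (not_lt.mpr hmono)
      have hc := Finset.card_le_card hsub
      rw [Finset.card_image_of_injective _ hσinj, Fin.card_Ici, hcompl] at hc
      omega
    obtain ⟨w₁, hw₁, hle₁⟩ := hlow
    obtain ⟨w₂, hw₂, hle₂⟩ := hhigh
    have h₁ := abs_le.mp (hMd w₁ hw₁)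
    have h₂ := abs_le.mp (hMd w₂ hw₂)
    rw [abs_le]
    constructor <;> [linarith [h₁.1]; linarith [h₂.2]]
  have hsum0 : ∑ w ∈ Reg, (f w - μ) = 0 := by
    rw [Finset.sum_sub_distrib, Finset.sum_const, hcard, hμ, nsmul_eq_mul]
    have hRne : (R : ℝ) ≠ 0 := Nat.cast_ne_zero.mpr (by omega)
    field_simp
    ring
  have hdecomp : ∑ w ∈ S, (f w - μ)
      = ∑ w ∈ S \ Reg, (f w - μ) - ∑ w ∈ Reg \ S, (f w - μ) := by
    have h1 := Finset.sum_inter_add_sum_sdiff S Reg (fun w => f w - μ)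
    have hh2 := Finset.sum_inter_add_sum_sdiff Reg S (fun w => f w - μ)
    rw [hsum0, Finset.inter_comm] at hh2
    linarith
  have hSd : (S \ Reg).card ≤ W - R := by
    refine le_trans (Finset.card_le_card ?_) hcompl.le
    intro w hw
    rw [Finset.mem_sdiff] at hw
    rw [Finset.mem_compl]
    exact hw.2
  have hRd : (Reg \ S).card ≤ 2 * (W - R) := by
    have e1 := Finset.card_sdiff_add_card_inter Reg S
    have e2 := Finset.card_sdiff_add_card_inter S Reg
    rw [Finset.inter_comm] at e2
    omega
  have hbound : |∑ w ∈ S, (f w - μ)| ≤ 3 * ((W - R : ℕ) : ℝ) * Md := by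
    rw [hdecomp]
    have b1 : |∑ w ∈ S \ Reg, (f w - μ)| ≤ ((W - R : ℕ) : ℝ) * Md := by
      refine le_trans (Finset.abs_sum_le_sum_abs _ _) ?_
      refine le_trans (Finset.sum_le_card_nsmul _ _ Md ?_) ?_
      · intro w hw
        exact hsurv w (Finset.mem_sdiff.mp hw).1
      · rw [nsmul_eq_mul]
        exact mul_le_mul_of_nonneg_right (Nat.cast_le.mpr hSd) hMd0
    have b2 : |∑ w ∈ Reg \ S, (f w - μ)| ≤ 2 * ((W - R : ℕ) : ℝ) * Md := by
      refine le_trans (Finset.abs_sum_le_sum_abs _ _) ?_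
      refine le_trans (Finset.sum_le_card_nsmul _ _ Md ?_) ?_
      · intro w hw
        exact hMd w (Finset.mem_sdiff.mp hw).1
      · rw [nsmul_eq_mul]
        calc ((Reg \ S).card : ℝ) * Md ≤ ((2 * (W - R) : ℕ) : ℝ) * Md :=
              mul_le_mul_of_nonneg_right (Nat.cast_le.mpr hRd) hMd0
          _ = 2 * ((W - R : ℕ) : ℝ) * Md := by push_cast; ring
    calc |∑ w ∈ S \ Reg, (f w - μ) - ∑ w ∈ Reg \ S, (f w - μ)|
        ≤ |∑ w ∈ S \ Reg, (f w - μ)| + |∑ w ∈ Reg \ S, (f w - μ)| := abs_sub _ _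
      _ ≤ ((W - R : ℕ) : ℝ) * Md + 2 * ((W - R : ℕ) : ℝ) * Md := add_le_add b1 b2
      _ = 3 * ((W - R : ℕ) : ℝ) * Md := by ring
  have hkpos : (0:ℝ) < ((2 * R - W : ℕ) : ℝ) := Nat.cast_pos.mpr (by omega)
  have hsumS : ∑ i ∈ I, f (σ i) = ∑ w ∈ S, f w := by
    rw [hS, Finset.sum_image (fun a _ b _ h => hσinj h)]
  have hT : ((2 * R - W : ℕ) : ℝ)⁻¹ * (∑ i ∈ I, f (σ i)) - μ
      = ((2 * R - W : ℕ) : ℝ)⁻¹ * ∑ w ∈ S, (f w - μ) := by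
    rw [hsumS, Finset.sum_sub_distrib, Finset.sum_const, hScard, nsmul_eq_mul, mul_sub]
    field_simp
  rw [hT, abs_mul, abs_inv, abs_of_pos hkpos, div_mul_eq_mul_div, inv_mul_eq_div,
    div_le_div_iff₀ hkpos hkpos]
  calc |∑ w ∈ S, (f w - μ)| * ((2 * R - W : ℕ) : ℝ)
      ≤ (3 * ((W - R : ℕ) : ℝ) * Md) * ((2 * R - W : ℕ) : ℝ) :=
        mul_le_mul_of_nonneg_right hbound hkpos.le
    _ = 3 * ((W - R : ℕ) : ℝ) * Md * ((2 * R - W : ℕ) : ℝ) := by ring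



/-- Coordinate-wise trimmed mean: in each dimension `d`, sort the `W` values, discard the
`W − R` smallest and the `W − R` largest, and average the remaining `2R − W` values. -/
noncomputable def triMean (W R D : ℕ) (y : Fin W → EuclideanSpace ℝ (Fin D)) :
    EuclideanSpace ℝ (Fin D) :=
  WithLp.toLp 2 <| fun d => ((2 * R - W : ℕ) : ℝ)⁻¹ *
    ∑ i ∈ Finset.univ.filter (fun i : Fin W => W - R ≤ (i : ℕ) ∧ (i : ℕ) < R),
      y (Tuple.sort (fun w => y w d) i) d

/-- if `δ = 1 − R/W < 1/2`, then
`‖TriMean(y) − ȳ‖ ≤ (3δ/(1−2δ)) · min{√D, √R} · max_{w ∈ Reg} ‖y w − ȳ‖`,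
where `ȳ` is the average over the `R` regular workers. -/
theorem stmt_8 (W R D : ℕ) (hRW : R ≤ W) (h2 : W < 2 * R)
    (Reg : Finset (Fin W)) (hReg : Reg.Nonempty) (hcard : Reg.card = R)
    (y : Fin W → EuclideanSpace ℝ (Fin D)) :
    ‖triMean W R D y - (R : ℝ)⁻¹ • ∑ w ∈ Reg, y w‖ ≤
      3 * (1 - (R : ℝ) / W) / (1 - 2 * (1 - (R : ℝ) / W)) *
        min (Real.sqrt D) (Real.sqrt R) *
        Reg.sup' hReg (fun w => ‖y w - (R : ℝ)⁻¹ • ∑ v ∈ Reg, y v‖) := by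
  have hR : 0 < R := by omega
  have hW : 0 < W := by omega
  set μ : EuclideanSpace ℝ (Fin D) := (R : ℝ)⁻¹ • ∑ w ∈ Reg, y w with hμdef
  set M : ℝ := Reg.sup' hReg (fun w => ‖y w - μ‖) with hMdef
  have hM0 : 0 ≤ M :=
    le_trans (norm_nonneg _) (Finset.le_sup' (fun w => ‖y w - μ‖) hReg.choose_spec)
  set C : ℝ := 3 * ((W - R : ℕ) : ℝ) / ((2 * R - W : ℕ) : ℝ) with hCdef
  have hC0 : 0 ≤ C := by
    apply div_nonneg
    · positivity
    · positivity
  -- rewrite the constant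
  have hCeq : 3 * (1 - (R : ℝ) / W) / (1 - 2 * (1 - (R : ℝ) / W)) = C := by
    have hW0 : (W : ℝ) ≠ 0 := Nat.cast_ne_zero.mpr (by omega)
    have e1 : ((W - R : ℕ) : ℝ) = (W : ℝ) - R := by
      rw [Nat.cast_sub hRW]
    have e2 : ((2 * R - W : ℕ) : ℝ) = 2 * (R : ℝ) - W := by
      rw [Nat.cast_sub (le_of_lt h2)]; push_cast; ring
    have hk' : 2 * (R : ℝ) - W ≠ 0 := by
      have : (W : ℝ) < 2 * R := by exact_mod_cast h2
      linarith
    have hd : 1 - 2 * (1 - (R : ℝ) / W) ≠ 0 := by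
      have hrw : 1 - 2 * (1 - (R : ℝ) / W) = (2 * (R : ℝ) - W) / W := by
        field_simp; ring
      rw [hrw]
      exact div_ne_zero hk' hW0
    rw [hCdef, e1, e2, div_eq_div_iff hd hk']
    linear_combination (-3 : ℝ) * div_mul_cancel₀ (R : ℝ) hW0
  -- coordinatewise deviation bound
  set Md : Fin D → ℝ := fun d => Reg.sup' hReg (fun w => |y w d - μ d|) with hMddef
  have hMd0 : ∀ d, 0 ≤ Md d := fun d =>
    le_trans (abs_nonneg _) (Finset.le_sup' (fun w => |y w d - μ d|) hReg.choose_spec)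
  have hμd : ∀ d, μ d = (R : ℝ)⁻¹ * ∑ w ∈ Reg, y w d := by
    intro d
    rw [hμdef, PiLp.smul_apply, smul_eq_mul]
    congr 1
    rw [WithLp.ofLp_sum]
    exact Finset.sum_apply d Reg (fun w => (y w).ofLp)
  have key : ∀ d, |triMean W R D y d - μ d| ≤ C * Md d := by
    intro d
    rw [hCdef]
    exact coord_key W R hRW h2 Reg hReg hcard (fun w => y w d) (μ d) (hμd d) (Md d)
      (fun w hw => Finset.le_sup' (fun w => |y w d - μ d|) hw)
  have hMdle : ∀ d, Md d ≤ M := by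
    intro d
    obtain ⟨w0, hw0, heq⟩ := Finset.exists_mem_eq_sup' hReg (fun w => |y w d - μ d|)
    calc Md d = |y w0 d - μ d| := heq
      _ = |(y w0 - μ) d| := by rw [PiLp.sub_apply]
      _ ≤ ‖y w0 - μ‖ := abs_coord_le _ _
      _ ≤ M := Finset.le_sup' (fun w => ‖y w - μ‖) hw0
  -- two bounds on ∑ (Md d)^2
  have sum1 : ∑ d, (Md d) ^ 2 ≤ (D : ℝ) * M ^ 2 := by
    refine le_trans (Finset.sum_le_card_nsmul _ _ (M ^ 2) ?_) ?_
    · intro d _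
      have h1 := hMdle d
      have h2 := hMd0 d
      nlinarith
    · rw [Finset.card_univ, Fintype.card_fin, nsmul_eq_mul]
  have sum2 : ∑ d, (Md d) ^ 2 ≤ (R : ℝ) * M ^ 2 := by
    have hterm : ∀ d : Fin D, (Md d) ^ 2 ≤ ∑ w ∈ Reg, (y w d - μ d) ^ 2 := by
      intro d
      obtain ⟨w0, hw0, heq⟩ := Finset.exists_mem_eq_sup' hReg (fun w => |y w d - μ d|)
      have : (Md d) ^ 2 = (y w0 d - μ d) ^ 2 := by
        rw [show Md d = |y w0 d - μ d| from heq, sq_abs]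
      rw [this]
      exact Finset.single_le_sum (f := fun w => (y w d - μ d) ^ 2)
        (fun w _ => sq_nonneg _) hw0
    calc ∑ d, (Md d) ^ 2 ≤ ∑ d, ∑ w ∈ Reg, (y w d - μ d) ^ 2 :=
          Finset.sum_le_sum (fun d _ => hterm d)
      _ = ∑ w ∈ Reg, ∑ d, (y w d - μ d) ^ 2 := Finset.sum_comm
      _ = ∑ w ∈ Reg, ‖y w - μ‖ ^ 2 := by
          refine Finset.sum_congr rfl (fun w _ => ?_)
          rw [EuclideanSpace.norm_eq,
            Real.sq_sqrt (Finset.sum_nonneg fun _ _ => sq_nonneg _)]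
          refine Finset.sum_congr rfl (fun d _ => ?_)
          rw [PiLp.sub_apply, Real.norm_eq_abs, sq_abs]
      _ ≤ ∑ w ∈ Reg, M ^ 2 := by
          refine Finset.sum_le_sum (fun w hw => ?_)
          have h1 : ‖y w - μ‖ ≤ M := Finset.le_sup' (fun w => ‖y w - μ‖) hw
          have h2 : (0:ℝ) ≤ ‖y w - μ‖ := norm_nonneg _
          nlinarith
      _ = (R : ℝ) * M ^ 2 := by rw [Finset.sum_const, hcard, nsmul_eq_mul]
  -- assemble
  rw [hCeq, EuclideanSpace.norm_eq]
  have hminnn : (0:ℝ) ≤ min (D : ℝ) (R : ℝ) :=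
    le_min (Nat.cast_nonneg D) (Nat.cast_nonneg R)
  have hsum : ∑ d, ‖(triMean W R D y - μ) d‖ ^ 2 ≤ C ^ 2 * (min (D : ℝ) (R : ℝ) * M ^ 2) := by
    calc ∑ d, ‖(triMean W R D y - μ) d‖ ^ 2
        ≤ ∑ d, C ^ 2 * (Md d) ^ 2 := by
          refine Finset.sum_le_sum (fun d _ => ?_)
          rw [PiLp.sub_apply, Real.norm_eq_abs]
          calc |triMean W R D y d - μ d| ^ 2 ≤ (C * Md d) ^ 2 := by
                have h1 := key d
                have h2 := abs_nonneg (triMean W R D y d - μ d)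
                nlinarith
            _ = C ^ 2 * (Md d) ^ 2 := by ring
      _ = C ^ 2 * ∑ d, (Md d) ^ 2 := by rw [Finset.mul_sum]
      _ ≤ C ^ 2 * min ((D : ℝ) * M ^ 2) ((R : ℝ) * M ^ 2) :=
          mul_le_mul_of_nonneg_left (le_min sum1 sum2) (sq_nonneg C)
      _ = C ^ 2 * (min (D : ℝ) (R : ℝ) * M ^ 2) := by
          rw [min_mul_of_nonneg _ _ (sq_nonneg M)]
  calc Real.sqrt (∑ d, ‖(triMean W R D y - μ) d‖ ^ 2)
      ≤ Real.sqrt (C ^ 2 * (min (D : ℝ) (R : ℝ) * M ^ 2)) := Real.sqrt_le_sqrt hsum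
    _ = C * (Real.sqrt (min (D : ℝ) (R : ℝ)) * M) := by
        rw [Real.sqrt_mul (sq_nonneg C), Real.sqrt_sq hC0,
          Real.sqrt_mul hminnn, Real.sqrt_sq hM0]
    _ = C * (min (Real.sqrt D) (Real.sqrt R) * M) := by
        rw [Monotone.map_min (fun a b h => Real.sqrt_le_sqrt h)]
    _ = C * min (Real.sqrt D) (Real.sqrt R) * M := by ring
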